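/- Let (M, τ) be a semifinite von Neumann algebra, 0 ≤ z ∈ S(M,τ), λ > 0, and r = e^z(λ, ∞) the spectral projection of z for (λ, ∞), with t = τ(r) < ∞. If p is a projection in M with τ(p) = t and μ(s; pzp) = μ(s; z) for all s ∈ (0, t), then p = r. -/

import Mathlib

open Matrix ComplexOrder

/-- The singular values of a matrix, sorted in increasing order. -/
noncomputable def svSorted {n : ℕ} (A : Matrix (Fin n) (Fin n) ℂ) : Fin n → ℝ :=
  fun i => Real.sqrt ((Matrix.posSemidef_conjTranspose_mul_self A).1.eigenvalues
    (Tuple.sort (Matrix.posSemidef_conjTranspose_mul_self A).1.eigenvalues i))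

namespace Stmt16Aux

open Finset

variable {n : ℕ}

lemma isUnit_det_unitary (U : Matrix.unitaryGroup (Fin n) ℂ) :
    IsUnit (U : Matrix (Fin n) (Fin n) ℂ).det := by
  have h : (U : Matrix (Fin n) (Fin n) ℂ) * (star U : Matrix (Fin n) (Fin n) ℂ) = 1 :=
    Matrix.mem_unitaryGroup_iff.mp U.2
  have := congrArg Matrix.det h
  rw [Matrix.det_mul, Matrix.det_one] at this
  exact IsUnit.of_mul_eq_one _ this

lemma isUnit_det_star_unitary (U : Matrix.unitaryGroup (Fin n) ℂ) :
    IsUnit (star U : Matrix (Fin n) (Fin n) ℂ).det := by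
  have h : (star U : Matrix (Fin n) (Fin n) ℂ) * (U : Matrix (Fin n) (Fin n) ℂ) = 1 :=
    Matrix.mem_unitaryGroup_iff'.mp U.2
  have := congrArg Matrix.det h
  rw [Matrix.det_mul, Matrix.det_one] at this
  exact IsUnit.of_mul_eq_one _ this

lemma rank_conj (U : Matrix.unitaryGroup (Fin n) ℂ) (M : Matrix (Fin n) (Fin n) ℂ) :
    ((U : Matrix (Fin n) (Fin n) ℂ) * M * (star U : Matrix (Fin n) (Fin n) ℂ)).rank
      = M.rank := by
  rw [Matrix.rank_mul_eq_left_of_isUnit_det _ _ (isUnit_det_star_unitary U),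
    Matrix.rank_mul_eq_right_of_isUnit_det _ _ (isUnit_det_unitary U)]

/-- For a unitary diagonalization, the number of diagonal entries equal to `μ` is
determined by the matrix itself. -/
lemma card_filter_eq_of_conj (c : Fin n → ℝ) (U : Matrix.unitaryGroup (Fin n) ℂ)
    (A : Matrix (Fin n) (Fin n) ℂ)
    (hA : A = (U : Matrix (Fin n) (Fin n) ℂ) * Matrix.diagonal (fun i => (c i : ℂ)) *
      (star U : Matrix (Fin n) (Fin n) ℂ)) (μ : ℝ) :
    (univ.filter fun i => c i = μ).card = n - (A - (μ : ℂ) • 1).rank := by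
  have hsub : A - (μ : ℂ) • 1 = (U : Matrix (Fin n) (Fin n) ℂ) *
      Matrix.diagonal (fun i => ((c i - μ : ℝ) : ℂ)) *
      (star U : Matrix (Fin n) (Fin n) ℂ) := by
    have h1 : (U : Matrix (Fin n) (Fin n) ℂ) * (star U : Matrix (Fin n) (Fin n) ℂ) = 1 :=
      Matrix.mem_unitaryGroup_iff.mp U.2
    have : Matrix.diagonal (fun i => ((c i - μ : ℝ) : ℂ)) =
        Matrix.diagonal (fun i => (c i : ℂ)) - (μ : ℂ) • 1 := by
      rw [Matrix.smul_one_eq_diagonal, Matrix.diagonal_sub]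
      push_cast
      rfl
    rw [hA, this, Matrix.mul_sub, Matrix.sub_mul]
    congr 1
    rw [Matrix.mul_smul, Matrix.smul_mul, mul_one, h1]
  rw [hsub, rank_conj, Matrix.rank_diagonal]
  have hcard : Fintype.card {i // ¬ ((c i - μ : ℝ) : ℂ) = 0}
      = (univ.filter fun i => ¬ c i = μ).card := by
    rw [Fintype.card_subtype]
    congr 1
    ext i
    simp [sub_eq_zero, Complex.ofReal_eq_zero]
  simp only [ne_eq]
  rw [hcard]
  have := Finset.card_filter_add_card_filter_not (s := (univ : Finset (Fin n)))
    (p := fun i => c i = μ)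
  simp only [Finset.card_univ, Fintype.card_fin] at this
  omega

/-- Two unitary diagonalizations of the same matrix have the same multiset of
diagonal entries. -/
lemma multiset_eq_of_conj_eq (c e : Fin n → ℝ) (U V : Matrix.unitaryGroup (Fin n) ℂ)
    (h : (U : Matrix (Fin n) (Fin n) ℂ) * Matrix.diagonal (fun i => (c i : ℂ)) *
        (star U : Matrix (Fin n) (Fin n) ℂ) =
      (V : Matrix (Fin n) (Fin n) ℂ) * Matrix.diagonal (fun i => (e i : ℂ)) *
        (star V : Matrix (Fin n) (Fin n) ℂ)) :
    Multiset.map c univ.val = Multiset.map e univ.val := by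
  classical
  ext μ
  rw [Multiset.count_map, Multiset.count_map]
  have h1 := card_filter_eq_of_conj c U _ rfl μ
  have h2 := card_filter_eq_of_conj e V _ rfl μ
  rw [h] at h1
  have key : ∀ f : Fin n → ℝ, Multiset.card (Multiset.filter (fun a => μ = f a) univ.val)
      = (univ.filter fun i => f i = μ).card := by
    intro f
    have h3 : (univ.filter fun i => f i = μ) = (univ.filter fun i => μ = f i) := by
      ext i; simp [eq_comm]
    rw [h3, Finset.card, Finset.filter_val]
  rw [key c, key e, h1, h2]

/-- Two monotone tuples with the same multiset of values are equal. -/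
lemma monotone_tuple_eq {f g : Fin n → ℝ} (hf : Monotone f) (hg : Monotone g)
    (h : Multiset.map f univ.val = Multiset.map g univ.val) : f = g := by
  apply List.ofFn_injective
  refine List.Perm.eq_of_sortedLE hf.sortedLE_ofFn hg.sortedLE_ofFn ?_
  rw [← Multiset.coe_eq_coe, ← Fin.univ_val_map, ← Fin.univ_val_map]
  exact h

/-- For a positive semidefinite matrix, the sorted singular values are the sorted
eigenvalues. -/
lemma svSorted_posSemidef {A : Matrix (Fin n) (Fin n) ℂ} (hA : A.PosSemidef) :
    svSorted A = hA.1.eigenvalues ∘ Tuple.sort hA.1.eigenvalues := by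
  classical
  set d : Fin n → ℝ := hA.1.eigenvalues with hd_def
  have hd : ∀ i, 0 ≤ d i := hA.eigenvalues_nonneg
  set H2 := (Matrix.posSemidef_conjTranspose_mul_self A).1 with hH2
  set e : Fin n → ℝ := H2.eigenvalues with he_def
  set U := hA.1.eigenvectorUnitary with hU
  set V := H2.eigenvectorUnitary with hV
  have hUU : (star U : Matrix (Fin n) (Fin n) ℂ) * (U : Matrix (Fin n) (Fin n) ℂ) = 1 :=
    Matrix.mem_unitaryGroup_iff'.mp U.2
  have hst := hA.1.spectral_theorem
  rw [Unitary.conjStarAlgAut_apply] at hst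
  have hAA : Aᴴ * A = (U : Matrix (Fin n) (Fin n) ℂ) *
      Matrix.diagonal (fun i => ((d i * d i : ℝ) : ℂ)) *
      (star U : Matrix (Fin n) (Fin n) ℂ) := by
    rw [hA.1.eq]
    conv_lhs => rw [hst]
    have hdd : (Matrix.diagonal (RCLike.ofReal ∘ d) : Matrix (Fin n) (Fin n) ℂ) *
        Matrix.diagonal (RCLike.ofReal ∘ d) =
        Matrix.diagonal (fun i => ((d i * d i : ℝ) : ℂ)) := by
      rw [Matrix.diagonal_mul_diagonal]
      congr 1
      funext i
      push_cast
      rfl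
    rw [← hdd]
    simp only [Matrix.mul_assoc]
    rw [← Matrix.mul_assoc (star (U : Matrix (Fin n) (Fin n) ℂ)) (U : Matrix (Fin n) (Fin n) ℂ),
      hUU, one_mul]
  have hmult : Multiset.map (fun i => d i * d i) univ.val = Multiset.map e univ.val := by
    apply multiset_eq_of_conj_eq (fun i => d i * d i) e U V
    rw [← hAA]
    have := H2.spectral_theorem
    rw [Unitary.conjStarAlgAut_apply] at this
    exact this
  have hsorted : e ∘ Tuple.sort e =
      (fun i => d i * d i) ∘ Tuple.sort (fun i => d i * d i) := by
    apply monotone_tuple_eq (Tuple.monotone_sort e) (Tuple.monotone_sort _)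
    have comp_ms : ∀ (f : Fin n → ℝ) (σ : Equiv.Perm (Fin n)),
        Multiset.map (f ∘ σ) univ.val = Multiset.map f univ.val := by
      intro f σ
      have : Multiset.map (f ∘ σ) univ.val = Multiset.map f (Multiset.map σ univ.val) := by
        rw [Multiset.map_map]
      rw [this, Multiset.map_univ_val_equiv]
    rw [comp_ms, comp_ms, hmult]
  have hmono : Monotone (d ∘ Tuple.sort (fun i => d i * d i)) := by
    intro a b hab
    have h2 := Tuple.monotone_sort (fun i => d i * d i) hab
    simp only [Function.comp_apply] at h2 ⊢
    nlinarith [hd (Tuple.sort (fun i => d i * d i) a), hd (Tuple.sort (fun i => d i * d i) b)]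
  have hdd : d ∘ Tuple.sort (fun i => d i * d i) = d ∘ Tuple.sort d :=
    Tuple.comp_sort_eq_comp_iff_monotone.mpr hmono
  funext i
  have h1 : svSorted A i = Real.sqrt ((e ∘ Tuple.sort e) i) := rfl
  rw [h1, hsorted]
  simp only [Function.comp_apply]
  rw [Real.sqrt_mul_self (hd _)]
  exact congrFun hdd i

section Proj

variable {q : Matrix (Fin n) (Fin n) ℂ} (hq : q * q = q) (hqH : qᴴ = q)

include hq hqH in
lemma proj_diag (j : Fin n) :
    q j j = ((∑ k, Complex.normSq (q j k) : ℝ) : ℂ) := by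
  conv_lhs => rw [← hq]
  rw [Matrix.mul_apply]
  rw [Complex.ofReal_sum]
  refine Finset.sum_congr rfl fun k _ => ?_
  have hk : q k j = (starRingEnd ℂ) (q j k) := by
    conv_lhs => rw [← hqH]
    rfl
  rw [hk, Complex.mul_conj]

include hq hqH in
lemma proj_row_zero (j : Fin n) (hj : (q j j).re = 0) : ∀ k, q j k = 0 := by
  have h := proj_diag hq hqH j
  rw [h] at hj
  rw [Complex.ofReal_re] at hj
  intro k
  have hz := (Finset.sum_eq_zero_iff_of_nonneg
    (fun k _ => Complex.normSq_nonneg (q j k))).mp hj k (Finset.mem_univ k)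
  exact Complex.normSq_eq_zero.mp hz

include hq hqH in
lemma proj_diag_re_nonneg (j : Fin n) : 0 ≤ (q j j).re := by
  rw [proj_diag hq hqH j, Complex.ofReal_re]
  exact Finset.sum_nonneg fun k _ => Complex.normSq_nonneg _

include hq hqH in
lemma proj_diag_re_le_one (j : Fin n) : (q j j).re ≤ 1 := by
  have h := proj_diag hq hqH j
  have hre : (q j j).re = ∑ k, Complex.normSq (q j k) := by rw [h, Complex.ofReal_re]
  have hsq : Complex.normSq (q j j) ≤ (q j j).re := by
    rw [hre]
    exact Finset.single_le_sum (fun k _ => Complex.normSq_nonneg _) (Finset.mem_univ j)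
  have him : (q j j).im = 0 := by rw [h]; exact Complex.ofReal_im _
  have : Complex.normSq (q j j) = (q j j).re ^ 2 := by
    rw [Complex.normSq_apply, him]; ring
  nlinarith [hsq, this]

end Proj

lemma sum_rev (t : ℕ) (F : Fin n → ℝ) :
    ∑ i ∈ univ.filter (fun i : Fin n => (i : ℕ) < t), F i.rev
      = ∑ j ∈ univ.filter (fun j : Fin n => n - t ≤ (j : ℕ)), F j := by
  have himg : (univ.filter (fun i : Fin n => (i : ℕ) < t)).map
      (Fin.revPerm : Equiv.Perm (Fin n)).toEmbedding
      = univ.filter (fun j : Fin n => n - t ≤ (j : ℕ)) := by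
    ext j
    rw [Finset.mem_map_equiv]
    rw [Fin.revPerm_symm]
    simp only [Finset.mem_filter, Finset.mem_univ, true_and]
    have h1 : ((Fin.revPerm j : Fin n) : ℕ) = n - (j + 1) := Fin.val_rev j
    have h2 := j.isLt
    constructor
    · intro h; rw [h1] at h; omega
    · intro h; rw [h1]; omega
  rw [← himg, Finset.sum_map]
  rfl

lemma upclosed_eq (g : Fin n → ℝ) (hg : Monotone g) (lam : ℝ) (t : ℕ)
    (hcard : (univ.filter fun j => lam < g j).card = t) :
    univ.filter (fun j => lam < g j) = univ.filter (fun j : Fin n => n - t ≤ (j : ℕ)) := by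
  ext j
  have hjn := j.isLt
  simp only [Finset.mem_filter, Finset.mem_univ, true_and]
  constructor
  · intro hj
    have hsub : Finset.Ici j ⊆ univ.filter (fun j => lam < g j) := by
      intro k hk
      simp only [Finset.mem_filter, Finset.mem_univ, true_and]
      exact lt_of_lt_of_le hj (hg (Finset.mem_Ici.mp hk))
    have hle := Finset.card_le_card hsub
    rw [hcard, Fin.card_Ici] at hle
    omega
  · intro hj
    by_contra hlt
    have hsub : univ.filter (fun j => lam < g j) ⊆ Finset.Ioi j := by
      intro k hk
      simp only [Finset.mem_filter, Finset.mem_univ, true_and] at hk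
      rw [Finset.mem_Ioi]
      by_contra hkj
      push_neg at hkj
      exact hlt (lt_of_lt_of_le hk (hg hkj))
    have hle := Finset.card_le_card hsub
    rw [hcard, Fin.card_Ioi] at hle
    omega

lemma trace_conj_diag (U : Matrix.unitaryGroup (Fin n) ℂ) (w : Fin n → ℂ) :
    ((U : Matrix (Fin n) (Fin n) ℂ) * Matrix.diagonal w *
      (star U : Matrix (Fin n) (Fin n) ℂ)).trace = ∑ i, w i := by
  have hUU : (star U : Matrix (Fin n) (Fin n) ℂ) * (U : Matrix (Fin n) (Fin n) ℂ) = 1 :=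
    Matrix.mem_unitaryGroup_iff'.mp U.2
  rw [Matrix.trace_mul_comm, ← Matrix.mul_assoc, hUU, one_mul, Matrix.trace_diagonal]

end Stmt16Aux

set_option maxHeartbeats 2000000 in
open Stmt16Aux Finset in
/-- Matrix version: if `z ⪰ 0`, `r` is the spectral projection of `z` for
`(λ, ∞)` of rank `t`, and `p` is a rank-`t` projection such that `p z p` has the
same `t` largest singular values as `z`, then `p = r`. -/
theorem stmt_16 {n : ℕ} (z : Matrix (Fin n) (Fin n) ℂ) (hz : z.PosSemidef)
    (lam : ℝ) (hlam : 0 < lam)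
    (r : Matrix (Fin n) (Fin n) ℂ)
    (hr : r = (hz.1.eigenvectorUnitary : Matrix (Fin n) (Fin n) ℂ) *
      Matrix.diagonal (fun i => if lam < hz.1.eigenvalues i then (1 : ℂ) else 0) *
      (star hz.1.eigenvectorUnitary : Matrix (Fin n) (Fin n) ℂ))
    (t : ℕ)
    (ht : t = (Finset.univ.filter fun i => lam < hz.1.eigenvalues i).card)
    (p : Matrix (Fin n) (Fin n) ℂ)
    (hp : p * p = p) (hpH : pᴴ = p) (htp : p.trace = (t : ℂ))
    (hsv : ∀ i : Fin n, (i : ℕ) < t →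
      svSorted (p * z * p) i.rev = svSorted z i.rev) :
    p = r := by
  classical
  set d : Fin n → ℝ := hz.1.eigenvalues with hd_def
  set U := hz.1.eigenvectorUnitary with hU_def
  have hUU' : (U : Matrix (Fin n) (Fin n) ℂ) * (star U : Matrix (Fin n) (Fin n) ℂ) = 1 :=
    Matrix.mem_unitaryGroup_iff.mp U.2
  have hUU : (star U : Matrix (Fin n) (Fin n) ℂ) * (U : Matrix (Fin n) (Fin n) ℂ) = 1 :=
    Matrix.mem_unitaryGroup_iff'.mp U.2
  set T : Finset (Fin n) := univ.filter (fun i => lam < d i) with hT_def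
  have hB : (p * z * p).PosSemidef := by
    have := hz.mul_mul_conjTranspose_same p
    rwa [hpH] at this
  set e : Fin n → ℝ := hB.1.eigenvalues with he_def
  have he0 : ∀ i, 0 ≤ e i := hB.eigenvalues_nonneg
  have hd0 : ∀ i, 0 ≤ d i := hz.eigenvalues_nonneg
  -- the compressed projection
  set q : Matrix (Fin n) (Fin n) ℂ :=
    (star U : Matrix (Fin n) (Fin n) ℂ) * p * (U : Matrix (Fin n) (Fin n) ℂ) with hq_def
  have hqq : q * q = q := by
    have h1 : q * q = (star U : Matrix (Fin n) (Fin n) ℂ) *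
        (p * (((U : Matrix (Fin n) (Fin n) ℂ) * (star U : Matrix (Fin n) (Fin n) ℂ)) *
          (p * (U : Matrix (Fin n) (Fin n) ℂ)))) := by
      simp only [hq_def, Matrix.mul_assoc]
    rw [h1, hUU', one_mul, ← Matrix.mul_assoc p p, hp, hq_def, Matrix.mul_assoc]
  have hqH : qᴴ = q := by
    rw [← Matrix.star_eq_conjTranspose, hq_def]
    simp only [StarMul.star_mul, star_star]
    rw [Matrix.star_eq_conjTranspose p, hpH]
    simp only [Matrix.mul_assoc]
  set c : Fin n → ℝ := fun j => (q j j).re with hc_def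
  have hc0 : ∀ j, 0 ≤ c j := fun j => proj_diag_re_nonneg hqq hqH j
  have hc1 : ∀ j, c j ≤ 1 := fun j => proj_diag_re_le_one hqq hqH j
  -- trace of q
  have htrq : q.trace = (t : ℂ) := by
    rw [hq_def, Matrix.trace_mul_comm, ← Matrix.mul_assoc, hUU', one_mul, htp]
  have hsumc : ∑ j, c j = (t : ℝ) := by
    have h1 : q.trace.re = ((t : ℂ)).re := by rw [htrq]
    simpa [Matrix.trace, Matrix.diag, Complex.re_sum] using h1
  -- two trace formulas for p z p
  have htrB : (p * z * p).trace = ∑ j, (e j : ℂ) := by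
    conv_lhs => rw [hB.1.spectral_theorem]
    exact trace_conj_diag _ _
  have htrB2 : (p * z * p).trace = ∑ j, ((d j : ℂ) * q j j) := by
    have hzz : z = (U : Matrix (Fin n) (Fin n) ℂ) * Matrix.diagonal (RCLike.ofReal ∘ d) *
        (star U : Matrix (Fin n) (Fin n) ℂ) := hz.1.spectral_theorem
    have ht1 : (p * z * p).trace = (z * p).trace := by
      rw [Matrix.trace_mul_comm (p * z) p, ← Matrix.mul_assoc, hp, Matrix.trace_mul_comm p z]
    have h1 : (p * z * p).trace = (Matrix.diagonal (RCLike.ofReal ∘ d) * q).trace := by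
      rw [ht1]
      conv_lhs => rw [hzz]
      rw [show ((U : Matrix (Fin n) (Fin n) ℂ) * Matrix.diagonal (RCLike.ofReal ∘ d) *
          (star U : Matrix (Fin n) (Fin n) ℂ)) * p
        = (U : Matrix (Fin n) (Fin n) ℂ) * (Matrix.diagonal (RCLike.ofReal ∘ d) *
            ((star U : Matrix (Fin n) (Fin n) ℂ) * p)) from by simp only [Matrix.mul_assoc]]
      rw [Matrix.trace_mul_comm]
      rw [show Matrix.diagonal (RCLike.ofReal ∘ d) *
          ((star U : Matrix (Fin n) (Fin n) ℂ) * p) * (U : Matrix (Fin n) (Fin n) ℂ)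
        = Matrix.diagonal (RCLike.ofReal ∘ d) *
            ((star U : Matrix (Fin n) (Fin n) ℂ) * p * (U : Matrix (Fin n) (Fin n) ℂ))
          from by simp only [Matrix.mul_assoc]]
    rw [h1, Matrix.trace]
    refine Finset.sum_congr rfl fun j _ => ?_
    rw [Matrix.diag_apply, Matrix.diagonal_mul]
    rfl
  have hA1 : ∑ j, d j * c j = ∑ j, e j := by
    have h := congrArg Complex.re (htrB2.symm.trans htrB)
    simpa [Complex.re_sum, hc_def] using h
  -- comparing top sums via hsv
  have htn : t ≤ n := by
    rw [ht]
    calc (univ.filter fun i => lam < hz.1.eigenvalues i).card ≤ (univ : Finset (Fin n)).card :=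
      Finset.card_filter_le _ _
    _ = n := by simp
  set g : Fin n → ℝ := d ∘ Tuple.sort d with hg_def
  have hcard_g : (univ.filter fun j => lam < g j).card = t := by
    rw [ht, Finset.card_filter, Finset.card_filter]
    exact Equiv.sum_comp (Tuple.sort d) (fun i => if lam < d i then 1 else 0)
  have hfilt := upclosed_eq g (Tuple.monotone_sort d) lam t hcard_g
  have hS1 : ∑ j ∈ univ.filter (fun j : Fin n => n - t ≤ (j : ℕ)), g j = ∑ i ∈ T, d i := by
    rw [← hfilt, Finset.sum_filter, Finset.sum_filter]
    exact Equiv.sum_comp (Tuple.sort d) (fun i => if lam < d i then d i else 0)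
  have hS2 : ∑ j ∈ univ.filter (fun j : Fin n => n - t ≤ (j : ℕ)), (e ∘ Tuple.sort e) j
      = ∑ j ∈ univ.filter (fun j : Fin n => n - t ≤ (j : ℕ)), g j := by
    rw [← sum_rev t, ← sum_rev t]
    refine Finset.sum_congr rfl fun i hi => ?_
    have hit : (i : ℕ) < t := by simpa using hi
    have h := hsv i hit
    rw [svSorted_posSemidef hB, svSorted_posSemidef hz] at h
    exact h
  have hS3 : ∑ j ∈ univ.filter (fun j : Fin n => n - t ≤ (j : ℕ)), (e ∘ Tuple.sort e) j
      ≤ ∑ j, e j := by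
    have h1 : ∑ j, e j = ∑ j, (e ∘ Tuple.sort e) j := (Equiv.sum_comp (Tuple.sort e) e).symm
    rw [h1]
    exact Finset.sum_le_sum_of_subset_of_nonneg (Finset.filter_subset _ _)
      (fun j _ _ => he0 _)
  have hKey : ∑ i ∈ T, d i ≤ ∑ j, d j * c j := by
    rw [hA1, ← hS1, ← hS2]
    exact hS3
  -- Ky Fan style equality analysis
  set T' : Finset (Fin n) := univ.filter (fun j => ¬ lam < d j) with hT'_def
  have hsplit : ∀ F : Fin n → ℝ, ∑ j ∈ T, F j + ∑ j ∈ T', F j = ∑ j, F j := by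
    intro F
    exact Finset.sum_filter_add_sum_filter_not univ _ F
  have hcardT : T.card = t := ht.symm
  have e1 : ∑ j ∈ T, (d j - lam) * (1 - c j)
      = ∑ j ∈ T, d j - ∑ j ∈ T, d j * c j - lam * t + lam * ∑ j ∈ T, c j := by
    have h1 : ∀ j ∈ T, (d j - lam) * (1 - c j)
        = d j - d j * c j - (lam - lam * c j) := fun j _ => by ring
    rw [Finset.sum_congr rfl h1, Finset.sum_sub_distrib, Finset.sum_sub_distrib,
      Finset.sum_sub_distrib, ← Finset.mul_sum, Finset.sum_const, hcardT]
    push_cast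
    ring
  have e2 : ∑ j ∈ T', (lam - d j) * c j
      = lam * ∑ j ∈ T', c j - ∑ j ∈ T', d j * c j := by
    have h1 : ∀ j ∈ T', (lam - d j) * c j = lam * c j - d j * c j := fun j _ => by ring
    rw [Finset.sum_congr rfl h1, Finset.sum_sub_distrib, ← Finset.mul_sum]
  have hterm1 : ∀ j ∈ T, 0 ≤ (d j - lam) * (1 - c j) := by
    intro j hj
    have hdj : lam < d j := by
      rw [hT_def] at hj; simpa using hj
    have := hc1 j
    nlinarith
  have hterm2 : ∀ j ∈ T', 0 ≤ (lam - d j) * c j := by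
    intro j hj
    have hdj : ¬ lam < d j := by
      rw [hT'_def] at hj; simpa using hj
    have := hc0 j
    nlinarith [not_lt.mp hdj]
  have hΔ0 : ∑ j ∈ T, (d j - lam) * (1 - c j) + ∑ j ∈ T', (lam - d j) * c j = 0 := by
    have hd1 := hsplit (fun j => d j * c j)
    have hd2 := hsplit c
    have hle : ∑ j ∈ T, (d j - lam) * (1 - c j) + ∑ j ∈ T', (lam - d j) * c j ≤ 0 := by
      rw [e1, e2]
      have := hKey
      have hlamc : lam * ∑ j ∈ T, c j + lam * ∑ j ∈ T', c j = lam * t := by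
        rw [← mul_add, hd2, hsumc]
      linarith [hsumc, hd1, hd2]
    have hge : 0 ≤ ∑ j ∈ T, (d j - lam) * (1 - c j) + ∑ j ∈ T', (lam - d j) * c j :=
      add_nonneg (Finset.sum_nonneg hterm1) (Finset.sum_nonneg hterm2)
    linarith
  have hs1 : ∑ j ∈ T, (d j - lam) * (1 - c j) = 0 := by
    have h1 := Finset.sum_nonneg hterm1
    have h2 := Finset.sum_nonneg hterm2
    linarith
  have hc_on_T : ∀ j ∈ T, c j = 1 := by
    intro j hj
    have h0 := (Finset.sum_eq_zero_iff_of_nonneg hterm1).mp hs1 j hj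
    have hdj : lam < d j := by rw [hT_def] at hj; simpa using hj
    rcases mul_eq_zero.mp h0 with h | h
    · linarith
    · linarith
  have hsumT : ∑ j ∈ T, c j = (t : ℝ) := by
    rw [Finset.sum_congr rfl hc_on_T, Finset.sum_const, hcardT]
    simp
  have hsumT' : ∑ j ∈ T', c j = 0 := by
    have := hsplit c
    linarith [hsumc]
  have hc_on_T' : ∀ j ∈ T', c j = 0 := by
    intro j hj
    exact (Finset.sum_eq_zero_iff_of_nonneg (fun j _ => hc0 j)).mp hsumT' j hj
  -- q is the right diagonal matrix
  have hqdiag : q = Matrix.diagonal (fun i => if lam < d i then (1 : ℂ) else 0) := by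
    ext j k
    by_cases hj : lam < d j
    · have hjT : j ∈ T := by rw [hT_def]; simp [hj]
      have hcj : c j = 1 := hc_on_T j hjT
      have h1q : (1 - q) * (1 - q) = 1 - q := by
        have : (1 - q) * (1 - q) = 1 - q - q + q * q := by noncomm_ring
        rw [this, hqq]; abel
      have h1qH : (1 - q)ᴴ = 1 - q := by
        rw [Matrix.conjTranspose_sub, Matrix.conjTranspose_one, hqH]
      have hre : ((1 - q) j j).re = 0 := by
        have : ((1 - q) j j) = 1 - q j j := by
          simp [Matrix.sub_apply, Matrix.one_apply_eq]
        rw [this, Complex.sub_re, Complex.one_re]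
        have : (q j j).re = 1 := hcj
        rw [this]; ring
      have hrow := proj_row_zero h1q h1qH j hre k
      have hqk : q j k = (1 : Matrix (Fin n) (Fin n) ℂ) j k := by
        have h2 : (1 : Matrix (Fin n) (Fin n) ℂ) j k - q j k = 0 := by
          simpa [Matrix.sub_apply] using hrow
        linear_combination -h2
      rw [hqk, Matrix.one_apply, Matrix.diagonal_apply]
      by_cases hjk : j = k
      · subst hjk; simp [hj]
      · simp [hjk]
    · have hjT' : j ∈ T' := by
        rw [hT'_def]
        simp only [Finset.mem_filter, Finset.mem_univ, true_and]
        exact hj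
      have hcj : c j = 0 := hc_on_T' j hjT'
      have hrow := proj_row_zero hqq hqH j hcj k
      rw [hrow, Matrix.diagonal_apply]
      by_cases hjk : j = k
      · subst hjk; simp [hj]
      · simp [hjk]
  -- conclude
  have hpq : p = (U : Matrix (Fin n) (Fin n) ℂ) * q * (star U : Matrix (Fin n) (Fin n) ℂ) := by
    rw [hq_def]
    rw [show (U : Matrix (Fin n) (Fin n) ℂ) *
        ((star U : Matrix (Fin n) (Fin n) ℂ) * p * (U : Matrix (Fin n) (Fin n) ℂ)) *
        (star U : Matrix (Fin n) (Fin n) ℂ)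
      = (U : Matrix (Fin n) (Fin n) ℂ) * (star U : Matrix (Fin n) (Fin n) ℂ) *
          (p * ((U : Matrix (Fin n) (Fin n) ℂ) * (star U : Matrix (Fin n) (Fin n) ℂ)))
        from by simp only [Matrix.mul_assoc]]
    rw [hUU', one_mul, mul_one]
  rw [hpq, hqdiag, hr]
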